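/- Every multivariate polynomial p₄ of degree at most 4 in n variables admits a decomposition p₄(x) = Σ_{i≤j} x_i x_j p₂^{ij}(x) + Σ_{i,j} x_i(1−x_j) q₂^{ij}(x) + Σ_{i≤j} (1−x_i)(1−x_j) t₂^{ij}(x) + Σ_i x_i p₂^i(x) + Σ_i (1−x_i) q₂^i(x) + β₂(x), valid for all x ∈ ℝ^n, where all functions p₂^{ij}, q₂^{ij}, t₂^{ij}, p₂^i, q₂^i, β₂ are convex polynomials of degree at most 2. -/

import Mathlib

open Matrix Finset

/-- A convex polynomial of degree at most 2: a convex function of the form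
`x ↦ xᵀ P x + rᵀ x + w`. -/
def IsConvexQuad {n : ℕ} (q : (Fin n → ℝ) → ℝ) : Prop :=
  ConvexOn ℝ Set.univ q ∧
    ∃ (P : Matrix (Fin n) (Fin n) ℝ) (r : Fin n → ℝ) (w : ℝ),
      ∀ x, q x = x ⬝ᵥ P.mulVec x + r ⬝ᵥ x + w

lemma isConvexQuad_mk {n : ℕ} (q : (Fin n → ℝ) → ℝ)
    (P : Matrix (Fin n) (Fin n) ℝ) (r : Fin n → ℝ) (w : ℝ)
    (hP : ∀ v, 0 ≤ v ⬝ᵥ P.mulVec v)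
    (hq : ∀ x, q x = x ⬝ᵥ P.mulVec x + r ⬝ᵥ x + w) : IsConvexQuad q := by
  constructor
  · constructor
    · exact convex_univ
    · intro x _ y _ a b ha hb hab
      simp only [smul_eq_mul, hq]
      have key : (x - y) ⬝ᵥ P.mulVec (x - y)
          = x ⬝ᵥ P.mulVec x + y ⬝ᵥ P.mulVec y - x ⬝ᵥ P.mulVec y - y ⬝ᵥ P.mulVec x := by
        simp [Matrix.mulVec_sub, dotProduct_sub, sub_dotProduct]
        ring
      have h1 := hP (x - y)
      have hq2 : (a • x + b • y) ⬝ᵥ P.mulVec (a • x + b • y)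
          = a*a*(x ⬝ᵥ P.mulVec x) + a*b*(x ⬝ᵥ P.mulVec y) + a*b*(y ⬝ᵥ P.mulVec x)
            + b*b*(y ⬝ᵥ P.mulVec y) := by
        simp [Matrix.mulVec_add, Matrix.mulVec_smul, dotProduct_add, add_dotProduct,
          dotProduct_smul, smul_dotProduct, smul_eq_mul]
        ring
      have hr : r ⬝ᵥ (a • x + b • y) = a * (r ⬝ᵥ x) + b * (r ⬝ᵥ y) := by
        simp [dotProduct_add, dotProduct_smul, smul_eq_mul]
      rw [hq2, hr]
      rw [key] at h1
      have hb' : b = 1 - a := by linarith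
      subst hb'
      nlinarith [mul_nonneg (mul_nonneg ha hb) h1]
  · exact ⟨P, r, w, hq⟩

lemma cq_affine {n : ℕ} (r : Fin n → ℝ) (w : ℝ) :
    IsConvexQuad (fun x : Fin n → ℝ => r ⬝ᵥ x + w) :=
  isConvexQuad_mk _ 0 r w (by simp) (by simp)

lemma cq_const {n : ℕ} (w : ℝ) : IsConvexQuad (fun _ : Fin n → ℝ => w) :=
  isConvexQuad_mk _ 0 0 w (by simp) (by simp)

lemma cq_zero {n : ℕ} : IsConvexQuad (fun _ : Fin n → ℝ => (0:ℝ)) := cq_const 0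

lemma cq_add {n : ℕ} {f g : (Fin n → ℝ) → ℝ} (hf : IsConvexQuad f)
    (hg : IsConvexQuad g) : IsConvexQuad (fun x => f x + g x) := by
  obtain ⟨hcf, P, r, w, hf⟩ := hf
  obtain ⟨hcg, Q, s, v, hg⟩ := hg
  refine ⟨hcf.add hcg, P + Q, r + s, w + v, fun x => ?_⟩
  simp [hf, hg, Matrix.add_mulVec, dotProduct_add, add_dotProduct]
  ring

lemma cq_sq {n : ℕ} (c : ℝ) (hc : 0 ≤ c) (a : Fin n → ℝ) :
    IsConvexQuad (fun x : Fin n → ℝ => c * (a ⬝ᵥ x) ^ 2) := by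
  refine isConvexQuad_mk _ (Matrix.of fun i j => c * a i * a j) 0 0 ?_ ?_
  · intro v
    have : v ⬝ᵥ (Matrix.of fun i j => c * a i * a j).mulVec v = c * (a ⬝ᵥ v)^2 := by
      simp only [Matrix.mulVec, dotProduct, Matrix.of_apply, Finset.mul_sum,
        Finset.sum_mul, pow_two]
      rw [Finset.sum_comm]
      congr 1; funext i; congr 1; funext j; ring
    rw [this]
    positivity
  · intro x
    simp only [Matrix.mulVec, dotProduct, Matrix.of_apply, Finset.mul_sum,
      Finset.sum_mul, pow_two, zero_dotProduct, add_zero, Pi.zero_apply,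
      zero_mul, Finset.sum_const_zero]
    rw [Finset.sum_comm]
    congr 1; funext i; congr 1; funext j; ring

def Decomp {n : ℕ} (f : (Fin n → ℝ) → ℝ) : Prop :=
  ∃ (p₂' q₂' t₂' : Fin n → Fin n → (Fin n → ℝ) → ℝ)
    (p₂ q₂ : Fin n → (Fin n → ℝ) → ℝ) (β₂ : (Fin n → ℝ) → ℝ),
    (∀ i j, IsConvexQuad (p₂' i j)) ∧ (∀ i j, IsConvexQuad (q₂' i j)) ∧
    (∀ i j, IsConvexQuad (t₂' i j)) ∧
    (∀ i, IsConvexQuad (p₂ i)) ∧ (∀ i, IsConvexQuad (q₂ i)) ∧ IsConvexQuad β₂ ∧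
    ∀ x : Fin n → ℝ,
      f x =
        ∑ i, ∑ j ∈ Finset.univ.filter (fun j => i ≤ j), x i * x j * p₂' i j x
        + ∑ i, ∑ j, x i * (1 - x j) * q₂' i j x
        + ∑ i, ∑ j ∈ Finset.univ.filter (fun j => i ≤ j),
            (1 - x i) * (1 - x j) * t₂' i j x
        + ∑ i, x i * p₂ i x + ∑ i, (1 - x i) * q₂ i x + β₂ x

lemma Decomp_congr {n : ℕ} {f g : (Fin n → ℝ) → ℝ} (h : ∀ x, f x = g x)
    (hf : Decomp f) : Decomp g := by
  have : f = g := funext h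
  rwa [this] at hf

lemma Decomp_add {n : ℕ} {f g : (Fin n → ℝ) → ℝ} (hf : Decomp f) (hg : Decomp g) :
    Decomp (fun x => f x + g x) := by
  obtain ⟨P, Q, T, p, q, b, hP, hQ, hT, hp, hq, hb, hsum⟩ := hf
  obtain ⟨P', Q', T', p', q', b', hP', hQ', hT', hp', hq', hb', hsum'⟩ := hg
  refine ⟨fun i j x => P i j x + P' i j x, fun i j x => Q i j x + Q' i j x,
    fun i j x => T i j x + T' i j x, fun i x => p i x + p' i x,
    fun i x => q i x + q' i x, fun x => b x + b' x,
    fun i j => cq_add (hP i j) (hP' i j), fun i j => cq_add (hQ i j) (hQ' i j),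
    fun i j => cq_add (hT i j) (hT' i j), fun i => cq_add (hp i) (hp' i),
    fun i => cq_add (hq i) (hq' i), cq_add hb hb', fun x => ?_⟩
  simp only [hsum x, hsum' x, mul_add, Finset.sum_add_distrib]
  ring

lemma Decomp_zero {n : ℕ} : Decomp (fun _ : Fin n → ℝ => (0:ℝ)) := by
  refine ⟨fun _ _ _ => 0, fun _ _ _ => 0, fun _ _ _ => 0, fun _ _ => 0,
    fun _ _ => 0, fun _ => 0, fun _ _ => cq_zero, fun _ _ => cq_zero,
    fun _ _ => cq_zero, fun _ => cq_zero, fun _ => cq_zero, cq_zero, fun x => by simp⟩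

lemma Decomp_sum {n : ℕ} {α : Type*} (s : Finset α) (F : α → (Fin n → ℝ) → ℝ)
    (h : ∀ a ∈ s, Decomp (F a)) : Decomp (fun x => ∑ a ∈ s, F a x) := by
  classical
  induction s using Finset.induction_on with
  | empty => exact Decomp_congr (fun x => by simp) Decomp_zero
  | insert a s hnot ih =>
    refine Decomp_congr (fun x => ?_)
      (Decomp_add (h a (Finset.mem_insert_self a s))
        (ih (fun b hb => h b (Finset.mem_insert_of_mem hb))))
    rw [Finset.sum_insert hnot]

lemma AtomB {n : ℕ} {g : (Fin n → ℝ) → ℝ} (hg : IsConvexQuad g) : Decomp g := by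
  refine ⟨fun _ _ _ => 0, fun _ _ _ => 0, fun _ _ _ => 0, fun _ _ => 0,
    fun _ _ => 0, g, fun _ _ => cq_zero, fun _ _ => cq_zero,
    fun _ _ => cq_zero, fun _ => cq_zero, fun _ => cq_zero, hg, fun x => by simp⟩

lemma AtomP {n : ℕ} (i j : Fin n) (hij : i ≤ j) {g : (Fin n → ℝ) → ℝ}
    (hg : IsConvexQuad g) : Decomp (fun x => x i * x j * g x) := by
  classical
  refine ⟨fun a b => if a = i ∧ b = j then g else (fun _ => 0),
    fun _ _ _ => 0, fun _ _ _ => 0, fun _ _ => 0, fun _ _ => 0, fun _ => 0,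
    fun a b => by by_cases h : a = i ∧ b = j <;> simp [h, hg, cq_zero],
    fun _ _ => cq_zero, fun _ _ => cq_zero, fun _ => cq_zero, fun _ => cq_zero,
    cq_zero, fun x => ?_⟩
  simp only [apply_ite (fun f : (Fin n → ℝ) → ℝ => f x), mul_ite, mul_zero,
    ite_and, Pi.zero_apply, zero_mul, Finset.sum_const_zero, add_zero]
  rw [Finset.sum_eq_single_of_mem i (Finset.mem_univ i)
    (fun b _ hb => Finset.sum_eq_zero fun c _ => by simp [hb])]
  rw [Finset.sum_eq_single_of_mem j (by simp [hij]) (fun b _ hb => by simp [hb])]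
  simp

lemma AtomQ {n : ℕ} (i j : Fin n) {g : (Fin n → ℝ) → ℝ}
    (hg : IsConvexQuad g) : Decomp (fun x => x i * (1 - x j) * g x) := by
  classical
  refine ⟨fun _ _ _ => 0, fun a b => if a = i ∧ b = j then g else (fun _ => 0),
    fun _ _ _ => 0, fun _ _ => 0, fun _ _ => 0, fun _ => 0,
    fun _ _ => cq_zero,
    fun a b => by by_cases h : a = i ∧ b = j <;> simp [h, hg, cq_zero],
    fun _ _ => cq_zero, fun _ => cq_zero, fun _ => cq_zero,
    cq_zero, fun x => ?_⟩
  simp only [apply_ite (fun f : (Fin n → ℝ) → ℝ => f x), mul_ite, mul_zero,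
    ite_and, Pi.zero_apply, zero_mul, Finset.sum_const_zero, add_zero, zero_add]
  rw [Finset.sum_eq_single_of_mem i (Finset.mem_univ i)
    (fun b _ hb => Finset.sum_eq_zero fun c _ => by simp [hb])]
  rw [Finset.sum_eq_single_of_mem j (Finset.mem_univ j) (fun b _ hb => by simp [hb])]
  simp

lemma AtomT {n : ℕ} (i j : Fin n) (hij : i ≤ j) {g : (Fin n → ℝ) → ℝ}
    (hg : IsConvexQuad g) : Decomp (fun x => (1 - x i) * (1 - x j) * g x) := by
  classical
  refine ⟨fun _ _ _ => 0, fun _ _ _ => 0,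
    fun a b => if a = i ∧ b = j then g else (fun _ => 0),
    fun _ _ => 0, fun _ _ => 0, fun _ => 0,
    fun _ _ => cq_zero, fun _ _ => cq_zero,
    fun a b => by by_cases h : a = i ∧ b = j <;> simp [h, hg, cq_zero],
    fun _ => cq_zero, fun _ => cq_zero,
    cq_zero, fun x => ?_⟩
  simp only [apply_ite (fun f : (Fin n → ℝ) → ℝ => f x), mul_ite, mul_zero,
    ite_and, Pi.zero_apply, zero_mul, Finset.sum_const_zero, add_zero, zero_add]
  rw [Finset.sum_eq_single_of_mem i (Finset.mem_univ i)
    (fun b _ hb => Finset.sum_eq_zero fun c _ => by simp [hb])]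
  rw [Finset.sum_eq_single_of_mem j (by simp [hij]) (fun b _ hb => by simp [hb])]
  simp

lemma cq_congr {n : ℕ} {f g : (Fin n → ℝ) → ℝ} (h : ∀ x, f x = g x)
    (hf : IsConvexQuad f) : IsConvexQuad g := by
  have : f = g := funext h
  rwa [this] at hf

lemma cq_lin {n : ℕ} (c : ℝ) (k : Fin n) : IsConvexQuad (fun x => c * x k) :=
  cq_congr (f := fun x : Fin n → ℝ => Pi.single k c ⬝ᵥ x + 0)
    (fun x => by simp [single_dotProduct]) (cq_affine _ 0)

lemma cq_sq_single {n : ℕ} (c : ℝ) (hc : 0 ≤ c) (m : Fin n) :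
    IsConvexQuad (fun x => c * x m ^ 2) :=
  cq_congr (f := fun x : Fin n → ℝ => c * (Pi.single m (1:ℝ) ⬝ᵥ x) ^ 2)
    (fun x => by simp [single_dotProduct]) (cq_sq c hc _)

def vtwo {n : ℕ} (k l : Fin n) (s : ℝ) : Fin n → ℝ :=
  (Pi.single k 1 : Fin n → ℝ) + s • (Pi.single l 1 : Fin n → ℝ)

lemma M0 {n : ℕ} (c : ℝ) : Decomp (fun _ : Fin n → ℝ => c) := AtomB (cq_const c)

lemma M1 {n : ℕ} (c : ℝ) (k : Fin n) : Decomp (fun x => c * x k) := AtomB (cq_lin c k)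

lemma M2diag {n : ℕ} (c : ℝ) (k : Fin n) : Decomp (fun x => c * x k ^ 2) := by
  refine Decomp_congr (fun x => ?_)
    (Decomp_add (AtomQ k k (cq_const (-c))) (M1 c k))
  ring

lemma dot_two {n : ℕ} (k l : Fin n) (s : ℝ) (x : Fin n → ℝ) :
    vtwo k l s ⬝ᵥ x = x k + s * x l := by
  simp [vtwo, add_dotProduct, smul_dotProduct, single_dotProduct]

lemma M2cross {n : ℕ} (c : ℝ) (k l : Fin n) :
    Decomp (fun x => c * (x k * x l)) := by
  rcases le_total 0 c with hc | hc
  · refine Decomp_congr (fun x => ?_)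
      (Decomp_add (Decomp_add
        (AtomB (cq_sq (c/2) (by linarith) (vtwo k l 1)))
        (M2diag (-(c/2)) k)) (M2diag (-(c/2)) l))
    rw [dot_two]; ring
  · refine Decomp_congr (fun x => ?_)
      (Decomp_add (Decomp_add
        (AtomB (cq_sq (-c/2) (by linarith) (vtwo k l (-1))))
        (M2diag (c/2) k)) (M2diag (c/2) l))
    rw [dot_two]; ring

lemma M2 {n : ℕ} (c : ℝ) (k l : Fin n) : Decomp (fun x => c * (x k * x l)) :=
  M2cross c k l

lemma M3 {n : ℕ} (c : ℝ) (i j k : Fin n) :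
    Decomp (fun x => c * (x i * (x j * x k))) := by
  rcases le_total i j with h | h
  · exact Decomp_congr (fun x => by ring) (AtomP i j h (cq_lin c k))
  · exact Decomp_congr (fun x => by ring) (AtomP j i h (cq_lin c k))

lemma AtomPneg {n : ℕ} (i j : Fin n) (hij : i ≤ j) {S : (Fin n → ℝ) → ℝ}
    (hS : IsConvexQuad S) (hnS : Decomp (fun x => -(S x))) :
    Decomp (fun x => -(x i * x j * S x)) := by
  refine Decomp_congr (fun x => ?_)
    (Decomp_add (Decomp_add (Decomp_add hnS (AtomQ i j hS)) (AtomQ j i hS))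
      (AtomT i j hij hS))
  ring

lemma M4sq {n : ℕ} (c : ℝ) (i j m : Fin n) (hij : i ≤ j) :
    Decomp (fun x => x i * x j * (c * x m ^ 2)) := by
  rcases le_total 0 c with hc | hc
  · exact AtomP i j hij (cq_sq_single c hc m)
  · refine Decomp_congr (fun x => ?_)
      (AtomPneg i j hij (cq_sq_single (-c) (by linarith) m)
        (Decomp_congr (fun x => by ring) (M2diag c m)))
    ring

lemma M4cross {n : ℕ} (c : ℝ) (i j k l : Fin n) (hij : i ≤ j) :
    Decomp (fun x => x i * x j * (c * (x k * x l))) := by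
  rcases le_total 0 c with hc | hc
  · refine Decomp_congr (fun x => ?_)
      (Decomp_add (Decomp_add
        (AtomP i j hij (cq_sq (c/2) (by linarith) (vtwo k l 1)))
        (M4sq (-(c/2)) i j k hij)) (M4sq (-(c/2)) i j l hij))
    rw [dot_two]; ring
  · refine Decomp_congr (fun x => ?_)
      (Decomp_add (Decomp_add
        (AtomP i j hij (cq_sq (-c/2) (by linarith) (vtwo k l (-1))))
        (M4sq (c/2) i j k hij)) (M4sq (c/2) i j l hij))
    rw [dot_two]; ring

lemma M4 {n : ℕ} (c : ℝ) (i j k l : Fin n) :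
    Decomp (fun x => c * (x i * (x j * (x k * x l)))) := by
  rcases le_total i j with h | h
  · exact Decomp_congr (fun x => by ring) (M4cross c i j k l h)
  · exact Decomp_congr (fun x => by ring) (M4cross c j i k l h)

lemma ListM {n : ℕ} (L : List (Fin n)) (hL : L.length ≤ 4) (c : ℝ) :
    Decomp (fun x => c * (L.map x).prod) := by
  match L, hL with
  | [], _ => exact Decomp_congr (fun x => by simp) (M0 c)
  | [i], _ => exact Decomp_congr (fun x => by simp) (M1 c i)
  | [i, j], _ => exact Decomp_congr (fun x => by
      simp only [List.map_cons, List.map_nil, List.prod_cons, List.prod_nil]; ring) (M2 c i j)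
  | [i, j, k], _ => exact Decomp_congr (fun x => by
      simp only [List.map_cons, List.map_nil, List.prod_cons, List.prod_nil]; ring) (M3 c i j k)
  | [i, j, k, l], _ => exact Decomp_congr (fun x => by
      simp only [List.map_cons, List.map_nil, List.prod_cons, List.prod_nil]; ring) (M4 c i j k l)
  | a :: b :: d :: e :: f :: t, h => simp at h; omega

lemma exists_list {n : ℕ} (d : Fin n →₀ ℕ) :
    ∃ L : List (Fin n), L.length = d.sum (fun _ e => e) ∧
      ∀ x : Fin n → ℝ, (∏ i ∈ d.support, x i ^ d i) = (L.map x).prod := by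
  classical
  induction d using Finsupp.induction with
  | zero => exact ⟨[], by simp, fun x => by simp⟩
  | single_add a b f ha hb ih =>
    obtain ⟨L, hlen, hprod⟩ := ih
    refine ⟨List.replicate b a ++ L, ?_, fun x => ?_⟩
    · rw [Finsupp.sum_add_index' (fun _ => rfl) (fun _ _ _ => rfl),
        Finsupp.sum_single_index rfl]
      simp [hlen]
    · have h1 : (∏ i ∈ (Finsupp.single a b + f).support,
          x i ^ (Finsupp.single a b + f) i)
          = (Finsupp.single a b + f).prod fun i e => x i ^ e := rfl
      rw [h1, Finsupp.prod_add_index (fun _ _ => pow_zero _)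
        (fun _ _ _ _ => pow_add _ _ _)]
      have h3 : (Finsupp.single a b).prod (fun i e => x i ^ e) = x a ^ b :=
        Finsupp.prod_single_index (pow_zero _)
      have h2 : f.prod (fun i e => x i ^ e) = ∏ i ∈ f.support, x i ^ f i := rfl
      rw [h3, h2, hprod x]
      simp [List.prod_replicate]

/-- Every polynomial of degree at most 4 admits the SLC decomposition of
Theorem 4 with all involved degree-2 terms convex quadratics. -/
theorem slc_decomposition_degree4 {n : ℕ} (p₄ : MvPolynomial (Fin n) ℝ)
    (hdeg : p₄.totalDegree ≤ 4) :
    ∃ (p₂' q₂' t₂' : Fin n → Fin n → (Fin n → ℝ) → ℝ)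
      (p₂ q₂ : Fin n → (Fin n → ℝ) → ℝ) (β₂ : (Fin n → ℝ) → ℝ),
      (∀ i j, IsConvexQuad (p₂' i j)) ∧ (∀ i j, IsConvexQuad (q₂' i j)) ∧
      (∀ i j, IsConvexQuad (t₂' i j)) ∧
      (∀ i, IsConvexQuad (p₂ i)) ∧ (∀ i, IsConvexQuad (q₂ i)) ∧ IsConvexQuad β₂ ∧
      ∀ x : Fin n → ℝ,
        MvPolynomial.eval x p₄ =
          ∑ i, ∑ j ∈ Finset.univ.filter (fun j => i ≤ j), x i * x j * p₂' i j x
          + ∑ i, ∑ j, x i * (1 - x j) * q₂' i j x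
          + ∑ i, ∑ j ∈ Finset.univ.filter (fun j => i ≤ j),
              (1 - x i) * (1 - x j) * t₂' i j x
          + ∑ i, x i * p₂ i x + ∑ i, (1 - x i) * q₂ i x + β₂ x := by
  have hD : Decomp (fun x : Fin n → ℝ => MvPolynomial.eval x p₄) := by
    refine Decomp_congr (f := fun x => ∑ d ∈ p₄.support,
      p₄.coeff d * ∏ i ∈ d.support, x i ^ d i)
      (fun x => (MvPolynomial.eval_eq x p₄).symm) ?_
    refine Decomp_sum _ _ (fun d hd => ?_)
    obtain ⟨L, hlen, hprod⟩ := exists_list d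
    have hL : L.length ≤ 4 := by
      rw [hlen]; exact le_trans (MvPolynomial.le_totalDegree hd) hdeg
    exact Decomp_congr (fun x => by rw [hprod x]) (ListM L hL (p₄.coeff d))
  obtain ⟨P, Q, T, p, q, b, hP, hQ, hT, hp, hq, hb, hsum⟩ := hD
  exact ⟨P, Q, T, p, q, b, hP, hQ, hT, hp, hq, hb, hsum⟩
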